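/- Let $C^\bullet$ be a cochain complex with a complete decreasing filtration $\{F^k C^\bullet\}_{k \in \mathbb{Z}}$ (with $F^j \subseteq F^k$ for $k \le j$), and suppose there exists $d \ge 1$ such that $F^{\lambda} C^p \cap \partial(C^{p-1}) \subseteq \partial(F^{\lambda - d} C^{p-1})$ for all $\lambda, p$. Then the canonical map $H^*(F^k C^\bullet) \to \varprojlim_{j} H^*(F^k C^\bullet / F^j C^\bullet)$ is surjective. -/

import Mathlib

/-- Surjectivity of the canonical map `H^*(F^k C) → lim_j H^*(F^k C / F^j C)` for a
complete decreasing filtration of a cochain complex satisfying the boundary-depth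
condition. Stated concretely: every compatible system of relative cohomology classes
(represented by `ξ n ∈ F^k` with `∂(ξ n) ∈ F^n`, compatible modulo coboundaries and
`F^n`) is realized by a genuine cocycle `ξ∞ ∈ F^k`. -/
theorem stmt_1 {R : Type} [CommRing R] (C : ℤ → Type) [∀ p, AddCommGroup (C p)]
    [∀ p, Module R (C p)]
    (d : ∀ p, C p →ₗ[R] C (p + 1))
    (hd : ∀ p (x : C p), d (p + 1) (d p x) = 0)
    (F : ℤ → ∀ p, Submodule R (C p))
    -- decreasing filtration: `F j ⊆ F k` for `k ≤ j`
    (hdec : ∀ k j : ℤ, k ≤ j → ∀ p, F j p ≤ F k p)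
    -- each `F k` is a subcomplex
    (hsub : ∀ (k p : ℤ), ∀ x ∈ F k p, d p x ∈ F k (p + 1))
    -- Hausdorff part of completeness
    (hHaus : ∀ (p : ℤ) (x : C p), (∀ j : ℤ, x ∈ F j p) → x = 0)
    -- completeness
    (hcompl : ∀ (k p : ℤ) (x : ℕ → C p), (∀ n, x n ∈ F k p) →
      (∀ n : ℕ, x (n + 1) - x n ∈ F (n : ℤ) p) →
      ∃ y ∈ F k p, ∀ n : ℕ, y - x n ∈ F (n : ℤ) p)
    -- boundary-depth condition with shift `δ ≥ 1`
    (δ : ℤ) (hδ : 1 ≤ δ)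
    (hdepth : ∀ (lam p : ℤ) (x : C p), d p x ∈ F lam (p + 1) →
      ∃ y ∈ F (lam - δ) p, d p y = d p x) :
    ∀ (k p : ℤ) (ξ : ℕ → C (p + 1)),
      (∀ n, ξ n ∈ F k (p + 1)) →
      (∀ n : ℕ, d (p + 1) (ξ n) ∈ F (n : ℤ) (p + 1 + 1)) →
      (∀ n : ℕ, ∃ θ ∈ F k p, ξ (n + 1) - ξ n - d p θ ∈ F (n : ℤ) (p + 1)) →
      ∃ ξ' ∈ F k (p + 1), d (p + 1) ξ' = 0 ∧
        ∀ n : ℕ, ∃ θ ∈ F k p, ξ' - ξ n - d p θ ∈ F (n : ℤ) (p + 1) := by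
  intro k p ξ hξF hξd hcmp
  choose θ hθF hθr using hcmp
  choose y hyF hyd using fun n : ℕ => hdepth n (p+1) (ξ n) (hξd n)
  have hc0 : (0:ℤ) ≤ max (k + δ) δ :=
    le_trans (le_trans zero_le_one hδ) (le_max_right _ _)
  set c : ℕ := (max (k + δ) δ).toNat with hcdef
  have hcval : (c:ℤ) = max (k + δ) δ := Int.toNat_of_nonneg hc0
  have hc1 : k + δ ≤ (c:ℤ) := hcval ▸ le_max_left _ _
  have hc2 : δ ≤ (c:ℤ) := hcval ▸ le_max_right _ _
  set τ : ℕ → C p := fun n => -∑ i ∈ Finset.range n, θ i with hτ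
  have hτF : ∀ n, τ n ∈ F k p := fun n =>
    neg_mem (Submodule.sum_mem _ (fun i _ => hθF i))
  set ζ : ℕ → C (p+1) := fun n => ξ n - y n + d p (τ n) with hζ
  have hζd : ∀ n, d (p+1) (ζ n) = 0 := by
    intro n
    simp only [hζ, map_add, map_sub, hyd n, hd p (τ n)]
    abel
  have hζdiff : ∀ n : ℕ, ζ (n+1) - ζ n ∈ F ((n:ℤ) - δ) (p+1) := by
    intro n
    have hτs : τ (n+1) = τ n - θ n := by
      simp only [hτ, Finset.sum_range_succ]
      abel
    have heq : ζ (n+1) - ζ n = (ξ (n+1) - ξ n - d p (θ n)) - y (n+1) + y n := by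
      simp only [hζ, hτs, map_sub]
      abel
    rw [heq]
    refine add_mem (sub_mem ?_ ?_) (hyF n)
    · exact hdec _ _ (by linarith) _ (hθr n)
    · exact hdec _ _ (by push_cast; linarith) _ (hyF (n+1))
  set x : ℕ → C (p+1) := fun m => ζ (m + c) with hx
  have hxF : ∀ m, x m ∈ F k (p+1) := by
    intro m
    refine add_mem (sub_mem (hξF _) ?_) (hsub k p _ (hτF _))
    exact hdec k _ (by push_cast; linarith) _ (hyF (m + c))
  have hxdiff : ∀ m : ℕ, x (m+1) - x m ∈ F (m:ℤ) (p+1) := by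
    intro m
    have h1 : x (m+1) - x m = ζ (m + c + 1) - ζ (m + c) := by
      simp only [hx]
      congr 2
      omega
    rw [h1]
    exact hdec _ _ (by push_cast; linarith) _ (hζdiff (m + c))
  obtain ⟨Y, hYF, hYx⟩ := hcompl k (p+1) x hxF hxdiff
  have hYd : d (p+1) Y = 0 := by
    apply hHaus
    intro j
    have hm : j ≤ (j.toNat : ℤ) := Int.self_le_toNat j
    have h1 : d (p+1) Y = d (p+1) (Y - x j.toNat) := by
      rw [map_sub, hζd, sub_zero]
    rw [h1]
    exact hdec j _ hm _ (hsub _ _ _ (hYx j.toNat))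
  refine ⟨Y, hYF, hYd, ?_⟩
  intro n
  refine ⟨τ n, hτF n, ?_⟩
  have hτsplit : τ n = τ (n+c) + ∑ i ∈ Finset.Ico n (n+c), θ i := by
    have hsum : ∑ i ∈ Finset.range n, θ i + ∑ i ∈ Finset.Ico n (n+c), θ i
        = ∑ i ∈ Finset.range (n+c), θ i := by
      rw [Finset.range_eq_Ico, Finset.range_eq_Ico]
      exact Finset.sum_Ico_consecutive θ (Nat.zero_le n) (Nat.le_add_right n c)
    simp only [hτ]
    rw [← hsum]
    abel
  have tele : ∑ i ∈ Finset.Ico n (n+c), (ξ (i+1) - ξ i) = ξ (n+c) - ξ n := by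
    rw [Finset.sum_Ico_eq_sub _ (Nat.le_add_right n c),
      Finset.sum_range_sub (fun i => ξ i), Finset.sum_range_sub (fun i => ξ i)]
    abel
  have key : Y - ξ n - d p (τ n)
      = (Y - x n) + (∑ i ∈ Finset.Ico n (n+c), (ξ (i+1) - ξ i - d p (θ i))) - y (n+c) := by
    have hxval : x n = ξ (n+c) - y (n+c) + d p (τ (n+c)) := rfl
    have hsplit : ∑ i ∈ Finset.Ico n (n+c), (ξ (i+1) - ξ i - d p (θ i))
        = (ξ (n+c) - ξ n) - ∑ i ∈ Finset.Ico n (n+c), d p (θ i) := by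
      rw [Finset.sum_sub_distrib, tele]
    rw [hxval, hsplit, hτsplit, map_add, map_sum]
    abel
  rw [key]
  refine sub_mem (add_mem (hYx n) (Submodule.sum_mem _ ?_)) ?_
  · intro i hi
    have hni : (n:ℤ) ≤ (i:ℤ) := by exact_mod_cast (Finset.mem_Ico.mp hi).1
    exact hdec _ _ hni _ (hθr i)
  · exact hdec _ _ (by push_cast; linarith) _ (hyF (n+c))
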